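/- Let K be a p-adic field with absolute ramification index e satisfying e < p - 1, and let E be an elliptic curve over K with formal group Ê(𝔪). If α, α' ∈ 𝔪 represent the same nonzero class in Ê(𝔪)/p (i.e., α = α' +_Ê pβ for some β ∈ Ê(𝔪)), then v(α) = v(α'), where v is the normalized valuation of K. -/
import Mathlib


/-- In the formal group of an elliptic curve over a p-adic field with
absolute ramification index `e < p - 1`, two representatives of the same nonzero class
of `Ê(𝔪)/p` have the same valuation.  Here `O` is the valuation ring, `π` a uniformizer
(so `v(α) = n` iff `π^n ∣ α` and `¬ π^(n+1) ∣ α`), `fadd` is the formal group law, of the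
form `x + y + x*y*F(x,y)`, and `psmul` is multiplication by `p` in the formal group,
which satisfies `p Ê(𝔪) = Ê(𝔪^{1+e})`. -/
theorem stmt0 {O : Type*} [CommRing O] [IsDomain O] (π : O) (hπ : Irreducible π)
    (p e : ℕ) (hp : p.Prime) (he : e < p - 1)
    (hvp : π ^ e ∣ (p : O) ∧ ¬ π ^ (e + 1) ∣ (p : O))
    (fadd : O → O → O) (F : O → O → O)
    (hadd : ∀ x y, fadd x y = x + y + x * y * F x y)
    (psmul : O → O)
    (hhom : ∀ x y, π ∣ x → π ∣ y → psmul (fadd x y) = fadd (psmul x) (psmul y))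
    (hps1 : ∀ x, π ∣ x → π ^ (1 + e) ∣ psmul x)
    (hps2 : ∀ x, π ∣ x → π ^ (1 + e) ∣ x → ∃ β, π ∣ β ∧ psmul β = x)
    (α α' β : O) (hα : π ∣ α) (hα' : π ∣ α') (hβ : π ∣ β)
    (heq : α = fadd α' (psmul β))
    (hnz : ¬ ∃ γ, π ∣ γ ∧ α = psmul γ)
    (n : ℕ) :
    (π ^ n ∣ α ∧ ¬ π ^ (n + 1) ∣ α) ↔ (π ^ n ∣ α' ∧ ¬ π ^ (n + 1) ∣ α') := by
  -- α - α' is divisible by π^(1+e)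
  have hdiv : π ^ (1 + e) ∣ α - α' := by
    have h1 : π ^ (1 + e) ∣ psmul β := hps1 β hβ
    have h2 : α - α' = psmul β * (1 + α' * F α' (psmul β)) := by
      rw [heq, hadd]; ring
    rw [h2]; exact h1.mul_right _
  -- α is not divisible by π^(1+e)
  have hne : ¬ π ^ (1 + e) ∣ α := by
    intro h
    obtain ⟨γ, hγ, hγ2⟩ := hps2 α hα h
    exact hnz ⟨γ, hγ, hγ2.symm⟩
  constructor
  · rintro ⟨h1, h2⟩
    have hn : n ≤ e := by
      by_contra h
      push_neg at h
      exact hne ((pow_dvd_pow π (by omega)).trans h1)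
    refine ⟨?_, ?_⟩
    · have hd : π ^ n ∣ α - α' := (pow_dvd_pow π (by omega)).trans hdiv
      have := dvd_sub h1 hd
      rwa [sub_sub_cancel] at this
    · intro h
      apply h2
      have hd : π ^ (n + 1) ∣ α - α' := (pow_dvd_pow π (by omega)).trans hdiv
      have := dvd_add h hd
      rwa [add_sub_cancel] at this
  · rintro ⟨h1, h2⟩
    have hn : n ≤ e := by
      by_contra h
      push_neg at h
      apply hne
      have hd : π ^ (1 + e) ∣ α' := (pow_dvd_pow π (by omega)).trans h1
      have := dvd_add hd hdiv
      rwa [add_sub_cancel] at this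
    refine ⟨?_, ?_⟩
    · have hd : π ^ n ∣ α - α' := (pow_dvd_pow π (by omega)).trans hdiv
      have := dvd_add h1 hd
      rwa [add_sub_cancel] at this
    · intro h
      apply h2
      have hd : π ^ (n + 1) ∣ α - α' := (pow_dvd_pow π (by omega)).trans hdiv
      have := dvd_sub h hd
      rwa [sub_sub_cancel] at this
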